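/- If 𝒜 is a synchronizing automaton with n states and u ∈ Rad(𝒜) is a radical word, then the power u^{n−1} is a reset word of 𝒜. -/

import Mathlib

open scoped BigOperators

set_option synthInstance.maxHeartbeats 1000000
set_option maxHeartbeats 1000000

noncomputable section

/-- Action of a word on a state: `q · u`. -/
def actW {Q A : Type*} (δ : Q → A → Q) (q : Q) (u : List A) : Q :=
  u.foldl δ q

/-- The image `Q · u` of the full state set under a word. -/
def imageSet {Q A : Type*} [Fintype Q] [DecidableEq Q] (δ : Q → A → Q) (u : List A) :
    Finset Q :=
  Finset.image (fun q => actW δ q u) Finset.univ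

/-- The rank `rk(u) = |Q · u|` of a word. -/
def wordRank {Q A : Type*} [Fintype Q] [DecidableEq Q] (δ : Q → A → Q) (u : List A) : ℕ :=
  (imageSet δ u).card

/-- A word is reset (synchronizing) if `|Q · u| = 1`. -/
def IsReset {Q A : Type*} [Fintype Q] [DecidableEq Q] (δ : Q → A → Q) (u : List A) : Prop :=
  wordRank δ u = 1

/-- The automaton is synchronizing if it admits a reset word. -/
def IsSynchronizing {Q A : Type*} [Fintype Q] [DecidableEq Q] (δ : Q → A → Q) : Prop :=
  ∃ u : List A, IsReset δ u

/-- `Syn(𝒜)`, the set of reset words. -/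
def SynWords {Q A : Type*} [Fintype Q] [DecidableEq Q] (δ : Q → A → Q) : Set (List A) :=
  {u | IsReset δ u}

/-- The hyperplane `w⊥ = {v ∈ ℂQ : ∑ q, v q = 0}`. -/
def Wperp (Q : Type*) [Fintype Q] : Submodule ℂ (Q → ℂ) :=
  LinearMap.ker (∑ q : Q, (LinearMap.proj q : (Q → ℂ) →ₗ[ℂ] ℂ))

theorem mem_Wperp {Q : Type*} [Fintype Q] (v : Q → ℂ) :
    v ∈ Wperp Q ↔ ∑ q : Q, v q = 0 := by
  simp [Wperp, LinearMap.mem_ker, LinearMap.sum_apply]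

/-- The (right) action of a word on row vectors `v ↦ v·π(u)`. -/
def piLin {Q A : Type*} [Fintype Q] [DecidableEq Q] (δ : Q → A → Q) (u : List A) :
    (Q → ℂ) →ₗ[ℂ] (Q → ℂ) where
  toFun v := fun p => ∑ q ∈ Finset.univ.filter (fun q => actW δ q u = p), v q
  map_add' := by
    intro a b; funext p; simp [Finset.sum_add_distrib]
  map_smul' := by
    intro c v; funext p; simp [Finset.mul_sum]

theorem piLin_mem {Q A : Type*} [Fintype Q] [DecidableEq Q] (δ : Q → A → Q) (u : List A) :
    ∀ v ∈ Wperp Q, piLin δ u v ∈ Wperp Q := by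
  intro v hv
  rw [mem_Wperp] at hv ⊢
  have h := Finset.sum_fiberwise (Finset.univ : Finset Q) (fun q => actW δ q u) v
  calc ∑ p : Q, piLin δ u v p
      = ∑ p : Q, ∑ q ∈ Finset.univ.filter (fun q => actW δ q u = p), v q := rfl
    _ = ∑ q : Q, v q := h
    _ = 0 := hv

/-- The endomorphism of `w⊥` induced by a word. -/
def rhoEnd {Q A : Type*} [Fintype Q] [DecidableEq Q] (δ : Q → A → Q) (u : List A) :
    Module.End ℂ (Wperp Q) :=
  (piLin δ u).restrict (piLin_mem δ u)

/-- The representation `ρ : Σ* → End(w⊥)`; we record it in the multiplicative opposite so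
that `ρ (u ++ v) = ρ u * ρ v` (the paper's right-action convention). -/
def rho {Q A : Type*} [Fintype Q] [DecidableEq Q] (δ : Q → A → Q) (u : List A) :
    (Module.End ℂ (Wperp Q))ᵐᵒᵖ :=
  MulOpposite.op (rhoEnd δ u)

/-- `ℛ`, the ℂ-subalgebra generated by `ρ(Σ*)`. -/
def Ralg {Q A : Type*} [Fintype Q] [DecidableEq Q] (δ : Q → A → Q) :
    Subalgebra ℂ (Module.End ℂ (Wperp Q))ᵐᵒᵖ :=
  Algebra.adjoin ℂ (Set.range (rho δ))

/-- `ρ(u)` seen as an element of `ℛ`. -/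
def rhoR {Q A : Type*} [Fintype Q] [DecidableEq Q] (δ : Q → A → Q) (u : List A) :
    Ralg δ :=
  ⟨rho δ u, Algebra.subset_adjoin (Set.mem_range_self u)⟩

/-- The Jacobson radical `Rad(ℛ)` of `ℛ`, realised as a subset of the ambient algebra via
the standard characterisation: `x ∈ Rad(ℛ)` iff `x ∈ ℛ` and for every `y ∈ ℛ` the element
`1 - y * x` is left-invertible in `ℛ`. -/
def RadSet {Q A : Type*} [Fintype Q] [DecidableEq Q] (δ : Q → A → Q) :
    Set (Module.End ℂ (Wperp Q))ᵐᵒᵖ :=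
  {x | x ∈ Ralg δ ∧ ∀ y ∈ Ralg δ, ∃ z ∈ Ralg δ, z * (1 - y * x) = 1}

/-- `Rad(𝒜)`: the set of radical words, i.e. words `u` with `ρ(u) ∈ Rad(ℛ)`. -/
def RadWords {Q A : Type*} [Fintype Q] [DecidableEq Q] (δ : Q → A → Q) : Set (List A) :=
  {u | rho δ u ∈ RadSet δ}

/-- The automaton is semisimple when `Rad(𝒜) = Syn(𝒜)`. -/
def IsSemisimple {Q A : Type*} [Fintype Q] [DecidableEq Q] (δ : Q → A → Q) : Prop :=
  RadWords δ = SynWords δ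

/-- The `t`-packing number `D(t,r,n)`: the maximum size of a family of `r`-subsets of an
`n`-set in which every `t`-subset is contained in at most one member. -/
def packingNumber (t r n : ℕ) : ℕ :=
  sSup {m | ∃ F : Finset (Finset (Fin n)), F.card = m ∧ (∀ S ∈ F, S.card = r) ∧
    ∀ T : Finset (Fin n), T.card = t → (F.filter fun S => T ⊆ S).card ≤ 1}

/-- The former-rank `Fr(𝒜)`: the least rank of a non-reset word. -/
def formerRank {Q A : Type*} [Fintype Q] [DecidableEq Q] (δ : Q → A → Q) : ℕ :=
  sInf {m | ∃ u : List A, ¬ IsReset δ u ∧ wordRank δ u = m}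

/-- `Fs(𝒜)`: the set of former-synchronizing words. -/
def Fs {Q A : Type*} [Fintype Q] [DecidableEq Q] (δ : Q → A → Q) : Set (List A) :=
  {u | wordRank δ u = formerRank δ}

/-- `θ_i(u)`: the image of `ρ(u)` in the `i`-th Wedderburn–Artin matrix component, where
`e : ℛ → ∏ i, M_{n_i}(ℂ)` is the quotient map `ψ` followed by the fixed isomorphism. -/
def theta {Q A : Type*} [Fintype Q] [DecidableEq Q] (δ : Q → A → Q) {k : ℕ} {nn : Fin k → ℕ}
    (e : Ralg δ →ₐ[ℂ] ∀ i : Fin k, Matrix (Fin (nn i)) (Fin (nn i)) ℂ)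
    (u : List A) (i : Fin k) : Matrix (Fin (nn i)) (Fin (nn i)) ℂ :=
  e (rhoR δ u) i

/-- `supp(v) = {i : θ_i(v) ≠ 0}`. -/
def suppW {Q A : Type*} [Fintype Q] [DecidableEq Q] (δ : Q → A → Q) {k : ℕ} {nn : Fin k → ℕ}
    (e : Ralg δ →ₐ[ℂ] ∀ i : Fin k, Matrix (Fin (nn i)) (Fin (nn i)) ℂ)
    (v : List A) : Set (Fin k) :=
  {i | theta δ e v i ≠ 0}

/-- `u ∈ Σ* v Σ*`, i.e. `v` is a factor of `u`. -/
def InFactor {A : Type*} (v u : List A) : Prop :=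
  ∃ a b : List A, u = a ++ v ++ b

/-- `u` is a `v`-minimal word: `u ∈ Σ*vΣ*`, `supp(u)` is nonempty, and `supp(u)` is minimal
among the nonempty supports of words in `Σ*vΣ*`. -/
def IsVMinimal {Q A : Type*} [Fintype Q] [DecidableEq Q] (δ : Q → A → Q) {k : ℕ}
    {nn : Fin k → ℕ}
    (e : Ralg δ →ₐ[ℂ] ∀ i : Fin k, Matrix (Fin (nn i)) (Fin (nn i)) ℂ)
    (v u : List A) : Prop :=
  InFactor v u ∧ (suppW δ e u).Nonempty ∧
    ∀ z : List A, InFactor v z → suppW δ e z ⊆ suppW δ e u →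
      suppW δ e z = ∅ ∨ suppW δ e z = suppW δ e u

/-- The `i`-th factor monoid `ℳ_i = θ_i(Σ*)`. -/
def factorMonoid {Q A : Type*} [Fintype Q] [DecidableEq Q] (δ : Q → A → Q) {k : ℕ}
    {nn : Fin k → ℕ}
    (e : Ralg δ →ₐ[ℂ] ∀ i : Fin k, Matrix (Fin (nn i)) (Fin (nn i)) ℂ)
    (i : Fin k) : Set (Matrix (Fin (nn i)) (Fin (nn i)) ℂ) :=
  Set.range fun u : List A => theta δ e u i

/-- A two-sided ideal of the (sub)monoid `M`. -/
def IsSetIdeal {X : Type*} [Mul X] (M I : Set X) : Prop :=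
  I ⊆ M ∧ ∀ a ∈ M, ∀ x ∈ I, a * x ∈ I ∧ x * a ∈ I

/-- `I` is a `0`-minimal (two-sided) ideal of the monoid `M`. -/
def IsZeroMinimalIdeal {X : Type*} [Mul X] [Zero X] (M I : Set X) : Prop :=
  IsSetIdeal M I ∧ (0 : X) ∈ I ∧ I ≠ {0} ∧
    ∀ J : Set X, IsSetIdeal M J → (0 : X) ∈ J → J ⊆ I → J ≠ {0} → J = I

/-- `Rnk_i(g) = min {rk(u) : θ_i(u) = g}`. -/
def rnkElt {Q A : Type*} [Fintype Q] [DecidableEq Q] (δ : Q → A → Q) {k : ℕ}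
    {nn : Fin k → ℕ}
    (e : Ralg δ →ₐ[ℂ] ∀ i : Fin k, Matrix (Fin (nn i)) (Fin (nn i)) ℂ)
    (i : Fin k) (g : Matrix (Fin (nn i)) (Fin (nn i)) ℂ) : ℕ :=
  sInf {m | ∃ u : List A, theta δ e u i = g ∧ wordRank δ u = m}

/-- `Rnk(ℐ_i) = min {Rnk_i(g) : g ∈ ℐ_i ∖ {0}}`. -/
def rnkIdeal {Q A : Type*} [Fintype Q] [DecidableEq Q] (δ : Q → A → Q) {k : ℕ}
    {nn : Fin k → ℕ}
    (e : Ralg δ →ₐ[ℂ] ∀ i : Fin k, Matrix (Fin (nn i)) (Fin (nn i)) ℂ)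
    (i : Fin k) (I : Set (Matrix (Fin (nn i)) (Fin (nn i)) ℂ)) : ℕ :=
  sInf {m | ∃ g ∈ I, g ≠ 0 ∧ rnkElt δ e i g = m}

/-- `w` `u`-represents `g`: `w ∈ Σ*uΣ*`, `θ_i(w) = g`, and either `g = 0` or `rk(w)` is
minimum among all words with the first two properties. -/
def URepresents {Q A : Type*} [Fintype Q] [DecidableEq Q] (δ : Q → A → Q) {k : ℕ}
    {nn : Fin k → ℕ}
    (e : Ralg δ →ₐ[ℂ] ∀ i : Fin k, Matrix (Fin (nn i)) (Fin (nn i)) ℂ)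
    (u : List A) (i : Fin k) (w : List A) (g : Matrix (Fin (nn i)) (Fin (nn i)) ℂ) : Prop :=
  InFactor u w ∧ theta δ e w i = g ∧
    (g = 0 ∨ ∀ w' : List A, InFactor u w' → theta δ e w' i = g → wordRank δ w ≤ wordRank δ w')

/-- The relation `σ_i` on `ℐ_i`. -/
def sigmaRel {Q A : Type*} [Fintype Q] [DecidableEq Q] (δ : Q → A → Q) {k : ℕ}
    {nn : Fin k → ℕ}
    (e : Ralg δ →ₐ[ℂ] ∀ i : Fin k, Matrix (Fin (nn i)) (Fin (nn i)) ℂ)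
    (i : Fin k) (u : List A)
    (g f : Matrix (Fin (nn i)) (Fin (nn i)) ℂ) : Prop :=
  g = f ∨ ∃ w₁ w₂ : List A, URepresents δ e u i w₁ g ∧ URepresents δ e u i w₂ f ∧
    1 < (imageSet δ w₁ ∩ imageSet δ w₂).card

/-- `T ⊆ [1,k]` is a core. -/
def IsCore {Q A : Type*} [Fintype Q] [DecidableEq Q] (δ : Q → A → Q) {k : ℕ}
    {nn : Fin k → ℕ}
    (e : Ralg δ →ₐ[ℂ] ∀ i : Fin k, Matrix (Fin (nn i)) (Fin (nn i)) ℂ)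
    (T : Set (Fin k)) : Prop :=
  ∀ x : List A, (∀ i ∈ T, theta δ e x i = 0) → ∀ i : Fin k, theta δ e x i = 0

/-- A minimal core. -/
def IsMinimalCore {Q A : Type*} [Fintype Q] [DecidableEq Q] (δ : Q → A → Q) {k : ℕ}
    {nn : Fin k → ℕ}
    (e : Ralg δ →ₐ[ℂ] ∀ i : Fin k, Matrix (Fin (nn i)) (Fin (nn i)) ℂ)
    (T : Set (Fin k)) : Prop :=
  IsCore δ e T ∧ ∀ T' : Set (Fin k), T' ⊆ T → IsCore δ e T' → T' = T

/-- An automaton congruence. -/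
def IsCongruence {Q A : Type*} (δ : Q → A → Q) (σ : Q → Q → Prop) : Prop :=
  Equivalence σ ∧ ∀ q p : Q, σ q p → ∀ u : List A, σ (actW δ q u) (actW δ p u)

/-- A simple automaton: the only congruences are the identity and the universal relation. -/
def IsSimple {Q A : Type*} (δ : Q → A → Q) : Prop :=
  ∀ σ : Q → Q → Prop, IsCongruence δ σ → σ = Eq ∨ σ = fun _ _ => True



section Stmt18Aux

set_option linter.unusedSectionVars false

variable {Q A : Type*} [Fintype Q] [DecidableEq Q]

theorem actW_append (δ : Q → A → Q) (q : Q) (a b : List A) :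
    actW δ q (a ++ b) = actW δ (actW δ q a) b :=
  List.foldl_append

theorem piLin_append (δ : Q → A → Q) (a b : List A) (v : Q → ℂ) :
    piLin δ (a ++ b) v = piLin δ b (piLin δ a v) := by
  funext p
  have h := Finset.sum_fiberwise_eq_sum_filter (Finset.univ : Finset Q)
    (Finset.univ.filter fun r => actW δ r b = p) (fun q => actW δ q a) v
  show (∑ q ∈ Finset.univ.filter fun q => actW δ q (a ++ b) = p, v q)
      = ∑ r ∈ Finset.univ.filter fun r => actW δ r b = p,
          ∑ q ∈ Finset.univ.filter fun q => actW δ q a = r, v q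
  rw [h]
  apply Finset.sum_congr _ fun _ _ => rfl
  ext q
  simp [actW_append]

theorem rhoEnd_append (δ : Q → A → Q) (a b : List A) :
    rhoEnd δ (a ++ b) = rhoEnd δ b * rhoEnd δ a := by
  apply LinearMap.ext
  intro v
  apply Subtype.ext
  simp only [rhoEnd, Module.End.mul_apply, LinearMap.restrict_apply]
  rw [piLin_append]

theorem piLin_nil (δ : Q → A → Q) (v : Q → ℂ) : piLin δ [] v = v := by
  funext p
  show (∑ q ∈ Finset.univ.filter fun q => actW δ q [] = p, v q) = v p
  simp [actW, Finset.sum_filter, Finset.sum_ite_eq']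
  exact Finset.sum_eq_single_of_mem p (Finset.mem_filter.mpr ⟨Finset.mem_univ _, rfl⟩) (fun b hb hbp => absurd (Finset.mem_filter.mp hb).2 hbp)

theorem rhoEnd_flatten_replicate (δ : Q → A → Q) (u : List A) (m : ℕ) :
    rhoEnd δ (List.flatten (List.replicate m u)) = (rhoEnd δ u) ^ m := by
  induction m with
  | zero =>
    apply LinearMap.ext
    intro v
    apply Subtype.ext
    simp only [List.replicate, List.flatten_nil, pow_zero, rhoEnd, LinearMap.restrict_apply,
      Module.End.one_apply]
    exact piLin_nil δ v
  | succ m ih =>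
    rw [List.replicate_succ, List.flatten_cons, rhoEnd_append, ih, pow_succ]

theorem rhoEnd_nilpotent (δ : Q → A → Q) (u : List A)
    (hrad : ∀ y ∈ Ralg δ, ∃ z ∈ Ralg δ, z * (1 - y * rho δ u) = 1) :
    IsNilpotent (rhoEnd δ u) := by
  set X := rhoEnd δ u with hX
  have key : ∀ μ : ℂ, μ ≠ 0 → ¬ Module.End.HasEigenvalue X μ := by
    intro μ hμ
    have hy : MulOpposite.op ((μ⁻¹ : ℂ) • (1 : Module.End ℂ (Wperp Q))) ∈ Ralg δ := by
      have h := (Ralg δ).algebraMap_mem μ⁻¹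
      rwa [Algebra.algebraMap_eq_smul_one, ← MulOpposite.op_one, ← MulOpposite.op_smul] at h
    obtain ⟨z, hz, hz1⟩ := hrad _ hy
    have hcomp : ((1 : Module.End ℂ (Wperp Q)) - μ⁻¹ • X) * MulOpposite.unop z = 1 := by
      have h := congrArg MulOpposite.unop hz1
      simp only [MulOpposite.unop_mul, MulOpposite.unop_one, MulOpposite.unop_sub,
        rho, MulOpposite.unop_op, mul_smul_comm, mul_one] at h
      exact h
    have hsurj : Function.Surjective ((1 : Module.End ℂ (Wperp Q)) - μ⁻¹ • X) := by
      intro v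
      exact ⟨MulOpposite.unop z v, by rw [← Module.End.mul_apply, hcomp, Module.End.one_apply]⟩
    have hinj : Function.Injective ((1 : Module.End ℂ (Wperp Q)) - μ⁻¹ • X) :=
      LinearMap.injective_iff_surjective.mpr hsurj
    intro heig
    apply heig
    rw [eq_bot_iff]
    intro v hv
    rw [Module.End.mem_eigenspace_iff] at hv
    have h0 : ((1 : Module.End ℂ (Wperp Q)) - μ⁻¹ • X) v = 0 := by
      simp [hv, smul_smul, inv_mul_cancel₀ hμ]
    have h2 := hinj (a₁ := v) (a₂ := 0) (by simpa using h0)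
    simpa using h2
  have hint : IsIntegral ℂ X := Algebra.IsIntegral.isIntegral X
  set p := minpoly ℂ X with hpdef
  have hmon : p.Monic := minpoly.monic hint
  have hsplit : p.Splits := IsAlgClosed.splits p
  have hroots : ∀ a ∈ p.roots, a = 0 := by
    intro a ha
    by_contra h0
    exact key a h0 (Module.End.hasEigenvalue_iff_isRoot.mpr (Polynomial.isRoot_of_mem_roots ha))
  have hp : p = Polynomial.X ^ Multiset.card p.roots := by
    have hmap : p.roots.map (fun a => Polynomial.X - Polynomial.C a)
        = p.roots.map (fun _ => (Polynomial.X : Polynomial ℂ)) :=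
      Multiset.map_congr rfl fun a ha => by rw [hroots a ha, map_zero, sub_zero]
    conv_lhs => rw [hsplit.eq_prod_roots_of_monic hmon]
    rw [hmap, Multiset.map_const', Multiset.prod_replicate]
  refine ⟨Multiset.card p.roots, ?_⟩
  have h := minpoly.aeval ℂ X
  rw [← hpdef, hp] at h
  simpa using h

end Stmt18Aux

theorem stmt18 {Q A : Type*} [Fintype Q] [DecidableEq Q] (δ : Q → A → Q)
    (hsync : IsSynchronizing δ)
    (u : List A) (hu : u ∈ RadWords δ) :
    IsReset δ (List.flatten (List.replicate (Fintype.card Q - 1) u)) := by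
  obtain ⟨w0, hw0⟩ := hsync
  have hw0' : (imageSet δ w0).card = 1 := hw0
  haveI hQ : Nonempty Q := by
    have h : (imageSet δ w0).Nonempty := Finset.card_pos.mp (by omega)
    obtain ⟨x, hx⟩ := h
    exact ⟨x⟩
  set U := List.flatten (List.replicate (Fintype.card Q - 1) u) with hUdef
  have hnil : IsNilpotent (rhoEnd δ u) := rhoEnd_nilpotent δ u hu.2
  have hne : Wperp Q ≠ ⊤ := by
    intro h
    have h1 : (fun _ => (1 : ℂ)) ∈ Wperp Q := h ▸ Submodule.mem_top
    rw [mem_Wperp] at h1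
    simp [Finset.sum_const, Fintype.card_ne_zero] at h1
  have hlt : Module.finrank ℂ (Wperp Q) < Fintype.card Q := by
    have h := Submodule.finrank_lt (K := ℂ) (V := Q → ℂ) hne
    rwa [Module.finrank_pi ℂ] at h
  have hd : (rhoEnd δ u) ^ Module.finrank ℂ (Wperp Q) = 0 := by
    have h := LinearMap.aeval_self_charpoly (rhoEnd δ u)
    rw [hnil.charpoly_eq_X_pow_finrank] at h
    simpa using h
  have hU0 : rhoEnd δ U = 0 := by
    rw [hUdef, rhoEnd_flatten_replicate]
    exact pow_eq_zero_of_le (by omega) hd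
  have hall : ∀ p q : Q, actW δ p U = actW δ q U := by
    intro p q
    by_contra hne2
    set v : Q → ℂ := fun r => (if r = p then (1 : ℂ) else 0) - (if r = q then 1 else 0) with hv
    have hvmem : v ∈ Wperp Q := by
      rw [mem_Wperp]
      simp [hv, Finset.sum_sub_distrib]
    have h0 : piLin δ U v = 0 := by
      have h := congrArg Subtype.val (LinearMap.congr_fun hU0 ⟨v, hvmem⟩)
      simpa [rhoEnd, LinearMap.restrict_apply] using h
    have h1 := congrFun h0 (actW δ p U)
    have h2 : (∑ r ∈ Finset.univ.filter fun r => actW δ r U = actW δ p U, v r) = 0 := h1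
    have hqne : actW δ q U ≠ actW δ p U := fun h => hne2 h.symm
    rw [hv] at h2
    rw [Finset.sum_sub_distrib, Finset.sum_ite_eq', Finset.sum_ite_eq'] at h2
    simp [hqne] at h2
  obtain ⟨q0⟩ := hQ
  have himg : imageSet δ U = {actW δ q0 U} := by
    ext x
    simp only [imageSet, Finset.mem_image, Finset.mem_univ, true_and, Finset.mem_singleton]
    constructor
    · rintro ⟨q, rfl⟩; exact hall q q0
    · rintro rfl; exact ⟨q0, rfl⟩
  show wordRank δ U = 1
  rw [wordRank, himg, Finset.card_singleton]

end
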